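/- For every n ≥ 4 there exist disjoint point sets R and B in the plane with |R| = |B| = n such that, for every max-sum bichromatic matching E of R and B, the intersection of the n disks {D_{pq} : (p,q) ∈ E} is empty. -/

import Mathlib

noncomputable section

/-- Points of the plane with the Euclidean norm. -/
abbrev Pt : Type := EuclideanSpace ℝ (Fin 2)

/-- The closed disk with diameter the segment `pq`: center `(p+q)/2`, radius `‖p-q‖/2`. -/
def disk (p q : Pt) : Set Pt := Metric.closedBall (midpoint ℝ p q) (dist p q / 2)


/-- Total Euclidean length of the bichromatic matching that matches `p ∈ R` with `f p`. -/
def bmCost (R : Finset Pt) (f : Pt → Pt) : ℝ := ∑ p ∈ R, dist p (f p)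

/-- `f` is a max-sum bichromatic matching of `R` and `B`: it is a bijection from `R` onto `B`
maximizing the total Euclidean distance of matched pairs. -/
def IsMaxSumBichromatic (R B : Finset Pt) (f : Pt → Pt) : Prop :=
  Set.BijOn f ↑R ↑B ∧ ∀ g : Pt → Pt, Set.BijOn g ↑R ↑B → bmCost R g ≤ bmCost R f

namespace S3
open Finset
open scoped Classical

def pt (x y : ℝ) : Pt := WithLp.toLp 2 ![x, y]

@[simp] lemma pt0 (x y : ℝ) : pt x y 0 = x := rfl
@[simp] lemma pt1 (x y : ℝ) : pt x y 1 = y := rfl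

lemma pt_inj {a b c d : ℝ} (h : pt a b = pt c d) : a = c ∧ b = d :=
  ⟨congrArg (fun p : Pt => p 0) h, congrArg (fun p : Pt => p 1) h⟩

lemma pt_ext (p : Pt) : p = pt (p 0) (p 1) := by
  ext i
  fin_cases i <;> rfl

lemma dist_pt (p q : Pt) : dist p q = Real.sqrt ((p 0 - q 0)^2 + (p 1 - q 1)^2) := by
  rw [EuclideanSpace.dist_eq]
  simp [Fin.sum_univ_two, Real.dist_eq, sq_abs]

lemma mid_apply (p q : Pt) (i : Fin 2) : midpoint ℝ p q i = (p i + q i)/2 := by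
  rw [midpoint_eq_smul_add]; simp; ring

lemma mem_disk_iff {p q c : Pt} :
    c ∈ disk p q ↔ (c 0 - p 0)*(c 0 - q 0) + (c 1 - p 1)*(c 1 - q 1) ≤ 0 := by
  have h4 : dist p q / 2 = Real.sqrt (((p 0 - q 0)^2 + (p 1 - q 1)^2)/4) := by
    rw [dist_pt, show ((p 0 - q 0)^2 + (p 1 - q 1)^2)/4
      = ((p 0 - q 0)^2 + (p 1 - q 1)^2) * (1/2)^2 by ring, Real.sqrt_mul (by positivity),
      Real.sqrt_sq (by norm_num)]
    ring
  rw [disk, Metric.mem_closedBall, dist_pt, h4,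
    Real.sqrt_le_sqrt_iff (by positivity)]
  rw [mid_apply, mid_apply]
  constructor <;> intro h <;> nlinarith [h]

lemma dist_ge_x (p q : Pt) : q 0 - p 0 ≤ dist p q := by
  rw [dist_pt]
  have h1 : q 0 - p 0 ≤ |p 0 - q 0| := by
    rw [abs_sub_comm]; exact le_abs_self _
  refine h1.trans ?_
  rw [← Real.sqrt_sq_eq_abs]
  exact Real.sqrt_le_sqrt (by nlinarith [sq_nonneg (p 1 - q 1)])

lemma dist_le_x (p q : Pt) (h : p 0 < q 0) :
    dist p q ≤ (q 0 - p 0) + (q 1 - p 1)^2/(2*(q 0 - p 0)) := by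
  rw [dist_pt]
  have h2 : (0:ℝ) < q 0 - p 0 := by linarith
  refine Real.sqrt_le_sqrt ?_ |>.trans (le_of_eq (Real.sqrt_sq (by positivity)))
  have key : 2*(q 0 - p 0)*((q 1 - p 1)^2/(2*(q 0 - p 0))) = (q 1 - p 1)^2 := by
    field_simp
  nlinarith [sq_nonneg ((q 1 - p 1)^2/(2*(q 0 - p 0)))]

lemma sqrt_le_of_sq {a b : ℝ} (hb : 0 ≤ b) (h : a ≤ b^2) : Real.sqrt a ≤ b :=
  (Real.sqrt_le_sqrt h).trans (le_of_eq (Real.sqrt_sq hb))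

/-! ### The configuration -/

def M (n : ℕ) : ℝ := 10^7 * (n:ℝ)^3

def P1 : Pt := pt (1/2) 0
def P2 : Pt := pt 0 1
def P3 : Pt := pt 0 (-1)
def EE (i : ℕ) : Pt := pt (-10 - (i:ℝ)) 0
def B2 : Pt := pt 0 (-1/10)
def B3 : Pt := pt 0 (1/10)
def QQ (n j : ℕ) : Pt := pt (M n) (j:ℝ)

def Rs (n : ℕ) : Finset Pt :=
  insert P1 (insert P2 (insert P3 ((range (n-3)).image EE)))
def Bs (n : ℕ) : Finset Pt :=
  insert B2 (insert B3 ((range (n-2)).image (QQ n)))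

variable {n : ℕ}

lemma Mn_ge (hn : 4 ≤ n) : 640000000 ≤ M n := by
  have h4 : (4:ℝ) ≤ (n:ℝ) := by exact_mod_cast hn
  have h3 : (4:ℝ)^3 ≤ (n:ℝ)^3 := by
    have h0 : (0:ℝ) ≤ 4 := by norm_num
    exact pow_le_pow_left₀ h0 h4 3
  unfold M
  nlinarith

lemma mem_Rs_iff {x : Pt} : x ∈ Rs n ↔
    x = P1 ∨ x = P2 ∨ x = P3 ∨ ∃ i < n-3, x = EE i := by
  simp [Rs, eq_comm]

lemma mem_Bs_iff {x : Pt} : x ∈ Bs n ↔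
    x = B2 ∨ x = B3 ∨ ∃ j < n-2, x = QQ n j := by
  simp [Bs, eq_comm]

/-! ### Distinctness -/

lemma P1_ne_P2 : P1 ≠ P2 := fun h => by simpa using (pt_inj h).1
lemma P1_ne_P3 : P1 ≠ P3 := fun h => by simpa using (pt_inj h).1
lemma P2_ne_P3 : P2 ≠ P3 := fun h => by have := (pt_inj h).2; norm_num at this
lemma EE_ne_P1 (i : ℕ) : EE i ≠ P1 := fun h => by
  have := (pt_inj h).1
  have h0 : (0:ℝ) ≤ (i:ℝ) := Nat.cast_nonneg i
  norm_num at this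
  linarith
lemma EE_ne_P2 (i : ℕ) : EE i ≠ P2 := fun h => by simpa using (pt_inj h).2
lemma EE_ne_P3 (i : ℕ) : EE i ≠ P3 := fun h => by simpa using (pt_inj h).2
lemma EE_inj {i j : ℕ} (h : EE i = EE j) : i = j := by
  have := (pt_inj h).1
  have : (i:ℝ) = (j:ℝ) := by linarith
  exact_mod_cast this
lemma B2_ne_B3 : B2 ≠ B3 := fun h => by have := (pt_inj h).2; norm_num at this
lemma QQ_ne_B2 (hn : 4 ≤ n) (j : ℕ) : QQ n j ≠ B2 := fun h => by
  have := (pt_inj h).1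
  have := Mn_ge hn
  norm_num [M] at *
  linarith
lemma QQ_ne_B3 (hn : 4 ≤ n) (j : ℕ) : QQ n j ≠ B3 := fun h => by
  have := (pt_inj h).1
  have := Mn_ge hn
  norm_num [M] at *
  linarith
lemma QQ_inj {a b : ℕ} (h : QQ n a = QQ n b) : a = b := by
  have := (pt_inj h).2
  exact_mod_cast this

lemma card_Rs (hn : 4 ≤ n) : (Rs n).card = n := by
  have hinj : Set.InjOn EE ↑(range (n-3)) := fun a _ b _ h => EE_inj h
  have hcard : ((range (n-3)).image EE).card = n - 3 := by
    rw [Finset.card_image_of_injOn hinj, card_range]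
  have hP3 : P3 ∉ (range (n-3)).image EE := by
    simp only [mem_image]
    rintro ⟨i, -, h⟩
    exact EE_ne_P3 i h
  have hP2 : P2 ∉ insert P3 ((range (n-3)).image EE) := by
    simp only [mem_insert, mem_image]
    rintro (h | ⟨i, -, h⟩)
    · exact P2_ne_P3 h
    · exact EE_ne_P2 i h
  have hP1 : P1 ∉ insert P2 (insert P3 ((range (n-3)).image EE)) := by
    simp only [mem_insert, mem_image]
    rintro (h | h | ⟨i, -, h⟩)
    · exact P1_ne_P2 h
    · exact P1_ne_P3 h
    · exact EE_ne_P1 i h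
  rw [Rs, card_insert_of_notMem hP1, card_insert_of_notMem hP2,
    card_insert_of_notMem hP3, hcard]
  omega

lemma card_Bs (hn : 4 ≤ n) : (Bs n).card = n := by
  have hinj : Set.InjOn (QQ n) ↑(range (n-2)) := fun a _ b _ h => QQ_inj h
  have hcard : ((range (n-2)).image (QQ n)).card = n - 2 := by
    rw [Finset.card_image_of_injOn hinj, card_range]
  have hB3 : B3 ∉ (range (n-2)).image (QQ n) := by
    simp only [mem_image]
    rintro ⟨j, -, h⟩
    exact QQ_ne_B3 hn j h
  have hB2 : B2 ∉ insert B3 ((range (n-2)).image (QQ n)) := by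
    simp only [mem_insert, mem_image]
    rintro (h | ⟨j, -, h⟩)
    · exact B2_ne_B3 h
    · exact QQ_ne_B2 hn j h
  rw [Bs, card_insert_of_notMem hB2, card_insert_of_notMem hB3, hcard]
  omega

lemma disjoint_RsBs (hn : 4 ≤ n) : Disjoint (Rs n) (Bs n) := by
  rw [Finset.disjoint_left]
  intro x hx hxB
  have hMn := Mn_ge hn
  rcases mem_Rs_iff.1 hx with h | h | h | ⟨i, -, h⟩ <;>
      rcases mem_Bs_iff.1 hxB with h' | h' | ⟨j, -, h'⟩ <;> subst h
  · exact absurd (pt_inj h').1 (by norm_num)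
  · exact absurd (pt_inj h').1 (by norm_num)
  · exact absurd (pt_inj h').1 (by norm_num; linarith)
  · exact absurd (pt_inj h').2 (by norm_num)
  · exact absurd (pt_inj h').2 (by norm_num)
  · exact absurd (pt_inj h').1 (by norm_num; linarith)
  · exact absurd (pt_inj h').2 (by norm_num)
  · exact absurd (pt_inj h').2 (by norm_num)
  · exact absurd (pt_inj h').1 (by norm_num; linarith)
  · exact absurd (pt_inj h').1 (by have := Nat.cast_nonneg (α := ℝ) i; norm_num; linarith)
  · exact absurd (pt_inj h').1 (by have := Nat.cast_nonneg (α := ℝ) i; norm_num; linarith)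
  · exact absurd (pt_inj h').1 (by have := Nat.cast_nonneg (α := ℝ) i; norm_num; linarith)

/-! ### Distances and K bounds -/

lemma dist_P2B2 : dist P2 B2 = 11/10 := by
  rw [dist_pt]
  rw [show (P2 0 - B2 0)^2 + (P2 1 - B2 1)^2 = ((11/10:ℝ))^2 by
    simp only [P2, B2, pt0, pt1]; norm_num]
  exact Real.sqrt_sq (by norm_num)

lemma dist_P3B3 : dist P3 B3 = 11/10 := by
  rw [dist_pt]
  rw [show (P3 0 - B3 0)^2 + (P3 1 - B3 1)^2 = ((11/10:ℝ))^2 by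
    simp only [P3, B3, pt0, pt1]; norm_num]
  exact Real.sqrt_sq (by norm_num)

lemma dist_P3B2 : dist P3 B2 = 9/10 := by
  rw [dist_pt]
  rw [show (P3 0 - B2 0)^2 + (P3 1 - B2 1)^2 = ((9/10:ℝ))^2 by
    simp only [P3, B2, pt0, pt1]; norm_num]
  exact Real.sqrt_sq (by norm_num)

lemma dist_P2B3 : dist P2 B3 = 9/10 := by
  rw [dist_pt]
  rw [show (P2 0 - B3 0)^2 + (P2 1 - B3 1)^2 = ((9/10:ℝ))^2 by
    simp only [P2, B3, pt0, pt1]; norm_num]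
  exact Real.sqrt_sq (by norm_num)

lemma dist_P1B2 : dist P1 B2 ≤ 51/100 := by
  rw [dist_pt]
  apply sqrt_le_of_sq (by norm_num)
  norm_num [P1, B2]

lemma dist_P1B3 : dist P1 B3 ≤ 51/100 := by
  rw [dist_pt]
  apply sqrt_le_of_sq (by norm_num)
  norm_num [P1, B3]

lemma dist_EEB2 (i : ℕ) : EE i 0 + dist (EE i) B2 ≤ 1/2000 := by
  have h0 : (0:ℝ) ≤ (i:ℝ) := Nat.cast_nonneg i
  have hlt : EE i 0 < B2 0 := by norm_num [EE, B2]; linarith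
  have := dist_le_x (EE i) B2 hlt
  have hb : (B2 1 - EE i 1)^2/(2*(B2 0 - EE i 0)) ≤ 1/2000 := by
    norm_num [EE, B2]
    rw [div_le_iff₀ (by linarith)]
    linarith
  norm_num [EE, B2] at *
  linarith

lemma dist_EEB3 (i : ℕ) : EE i 0 + dist (EE i) B3 ≤ 1/2000 := by
  have h0 : (0:ℝ) ≤ (i:ℝ) := Nat.cast_nonneg i
  have hlt : EE i 0 < B3 0 := by norm_num [EE, B3]; linarith
  have := dist_le_x (EE i) B3 hlt
  have hb : (B3 1 - EE i 1)^2/(2*(B3 0 - EE i 0)) ≤ 1/2000 := by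
    norm_num [EE, B3]
    rw [div_le_iff₀ (by linarith)]
    linarith
  norm_num [EE, B3] at *
  linarith

lemma K2_le (x : Pt) (hx : x ∈ Rs n) : x 0 + dist x B2 ≤ 11/10 := by
  rcases mem_Rs_iff.1 hx with h | h | h | ⟨i, -, h⟩ <;> subst h
  · have h1 : P1 0 = 1/2 := rfl
    have := dist_P1B2; linarith
  · have h1 : P2 0 = 0 := rfl
    rw [dist_P2B2]; linarith
  · have h1 : P3 0 = 0 := rfl
    rw [dist_P3B2]; linarith
  · have := dist_EEB2 i; linarith

lemma K2_lt (x : Pt) (hx : x ∈ Rs n) (hne : x ≠ P2) : x 0 + dist x B2 ≤ 51/50 := by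
  rcases mem_Rs_iff.1 hx with h | h | h | ⟨i, -, h⟩ <;> subst h
  · have h1 : P1 0 = 1/2 := rfl
    have := dist_P1B2; linarith
  · exact absurd rfl hne
  · have h1 : P3 0 = 0 := rfl
    rw [dist_P3B2]; linarith
  · have := dist_EEB2 i; linarith

lemma K3_le (x : Pt) (hx : x ∈ Rs n) : x 0 + dist x B3 ≤ 11/10 := by
  rcases mem_Rs_iff.1 hx with h | h | h | ⟨i, -, h⟩ <;> subst h
  · have h1 : P1 0 = 1/2 := rfl
    have := dist_P1B3; linarith
  · have h1 : P2 0 = 0 := rfl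
    rw [dist_P2B3]; linarith
  · have h1 : P3 0 = 0 := rfl
    rw [dist_P3B3]; linarith
  · have := dist_EEB3 i; linarith

lemma K3_lt (x : Pt) (hx : x ∈ Rs n) (hne : x ≠ P3) : x 0 + dist x B3 ≤ 51/50 := by
  rcases mem_Rs_iff.1 hx with h | h | h | ⟨i, -, h⟩ <;> subst h
  · have h1 : P1 0 = 1/2 := rfl
    have := dist_P1B3; linarith
  · have h1 : P2 0 = 0 := rfl
    rw [dist_P2B3]; linarith
  · exact absurd rfl hne
  · have := dist_EEB3 i; linarith

/-! ### coordinate bounds for reds -/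

lemma red_x_le (x : Pt) (hx : x ∈ Rs n) : x 0 ≤ 1/2 := by
  rcases mem_Rs_iff.1 hx with h | h | h | ⟨i, -, h⟩ <;> subst h <;>
    norm_num [P1, P2, P3, EE]
  linarith [Nat.cast_nonneg (α := ℝ) i]

lemma red_y_abs (x : Pt) (hx : x ∈ Rs n) : (x 1)^2 ≤ 1 := by
  rcases mem_Rs_iff.1 hx with h | h | h | ⟨i, -, h⟩ <;> subst h <;>
    norm_num [P1, P2, P3, EE]

/-! ### The explicit near-optimal matching g0 -/

lemma QQ0 (j : ℕ) : QQ n j 0 = M n := rfl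
lemma QQ1 (j : ℕ) : QQ n j 1 = (j:ℝ) := rfl

def g0 (n : ℕ) : Pt → Pt := fun x =>
  if x = P2 then B2 else if x = P3 then B3 else if x = P1 then QQ n 0
  else QQ n (Int.toNat ⌊-10 - x 0⌋ + 1)

lemma g0_P2 : g0 n P2 = B2 := by simp [g0]
lemma g0_P3 : g0 n P3 = B3 := by simp [g0, P2_ne_P3.symm]
lemma g0_P1 : g0 n P1 = QQ n 0 := by simp [g0, P1_ne_P2, P1_ne_P3]
lemma g0_EE (i : ℕ) : g0 n (EE i) = QQ n (i+1) := by
  rw [g0]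
  rw [if_neg (EE_ne_P2 i), if_neg (EE_ne_P3 i), if_neg (EE_ne_P1 i)]
  congr 1
  have h1 : EE i 0 = -10 - (i:ℝ) := rfl
  rw [h1, show (-10 - (-10 - (i:ℝ))) = ((i:ℕ):ℝ) by push_cast; ring,
    Int.floor_natCast, Int.toNat_natCast]

lemma B2_mem : B2 ∈ Bs n := by simp [Bs]
lemma B3_mem : B3 ∈ Bs n := by simp [Bs]
lemma QQ_mem {j : ℕ} (hj : j < n - 2) : QQ n j ∈ Bs n := by
  simp only [Bs, mem_insert, mem_image, mem_range]
  exact Or.inr (Or.inr ⟨j, hj, rfl⟩)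

lemma P1_mem : P1 ∈ Rs n := by simp [Rs]
lemma P2_mem : P2 ∈ Rs n := by simp [Rs]
lemma P3_mem : P3 ∈ Rs n := by simp [Rs]

lemma g0_maps (hn : 4 ≤ n) : ∀ x ∈ Rs n, g0 n x ∈ Bs n := by
  intro x hx
  rcases mem_Rs_iff.1 hx with h | h | h | ⟨i, hi, h⟩ <;> subst h
  · rw [g0_P1]; exact QQ_mem (by omega)
  · rw [g0_P2]; exact B2_mem
  · rw [g0_P3]; exact B3_mem
  · rw [g0_EE]; exact QQ_mem (by omega)

lemma g0_inj (hn : 4 ≤ n) : Set.InjOn (g0 n) ↑(Rs n) := by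
  intro x hx y hy hxy
  rcases mem_Rs_iff.1 (Finset.mem_coe.1 hx) with h | h | h | ⟨i, hi, h⟩ <;>
    rcases mem_Rs_iff.1 (Finset.mem_coe.1 hy) with h' | h' | h' | ⟨i', hi', h'⟩ <;>
      subst h <;> subst h' <;>
        simp only [g0_P1, g0_P2, g0_P3, g0_EE] at hxy <;>
          first
          | rfl
          | (exact absurd hxy (QQ_ne_B2 hn _))
          | (exact absurd hxy.symm (QQ_ne_B2 hn _))
          | (exact absurd hxy (QQ_ne_B3 hn _))
          | (exact absurd hxy.symm (QQ_ne_B3 hn _))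
          | (exact absurd hxy B2_ne_B3)
          | (exact absurd hxy.symm B2_ne_B3)
          | (exact absurd (QQ_inj hxy) (by omega))
          | (exact congrArg EE (by have := QQ_inj hxy; omega))

lemma g0_bij (hn : 4 ≤ n) : Set.BijOn (g0 n) ↑(Rs n) ↑(Bs n) := by
  refine ⟨fun x hx => g0_maps hn x (Finset.mem_coe.1 hx), g0_inj hn, ?_⟩
  intro b hb
  have hcard : (Bs n).card ≤ (Rs n).card := by rw [card_Rs hn, card_Bs hn]
  have := Finset.surj_on_of_inj_on_of_card_le (s := Rs n) (t := Bs n)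
    (fun a _ => g0 n a) (fun a ha => g0_maps hn a ha)
    (fun a₁ a₂ ha₁ ha₂ h => g0_inj hn (Finset.mem_coe.2 ha₁) (Finset.mem_coe.2 ha₂) h)
    hcard b (Finset.mem_coe.1 hb)
  obtain ⟨a, ha, hab⟩ := this
  exact ⟨a, Finset.mem_coe.2 ha, hab.symm⟩

/-! ### Cost bounds -/

def Ssum (n : ℕ) : ℝ := ∑ p ∈ Rs n, (M n - p 0)

lemma sum_split (h : Pt → ℝ) {a b : Pt} {s : Finset Pt} (ha : a ∈ s) (hb : b ∈ s)
    (hab : a ≠ b) :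
    ∑ p ∈ s, h p = h a + h b + ∑ p ∈ (s.erase a).erase b, h p := by
  rw [← Finset.sum_erase_add s h ha,
    ← Finset.sum_erase_add (s.erase a) h (Finset.mem_erase.2 ⟨fun hh => hab hh.symm, hb⟩)]
  ring

lemma g0_lower (hn : 4 ≤ n) : Ssum n - 2*(M n) + 11/5 ≤ bmCost (Rs n) (g0 n) := by
  have hP2 : P2 ∈ Rs n := P2_mem
  have hP3 : P3 ∈ Rs n := P3_mem
  have hsplit : ∑ p ∈ Rs n, dist p (g0 n p)
      = dist P2 (g0 n P2) + dist P3 (g0 n P3)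
        + ∑ p ∈ ((Rs n).erase P2).erase P3, dist p (g0 n p) :=
    sum_split (fun p => dist p (g0 n p)) hP2 hP3 P2_ne_P3
  have hsplit2 : ∑ p ∈ Rs n, (M n - p 0)
      = (M n - P2 0) + (M n - P3 0) + ∑ p ∈ ((Rs n).erase P2).erase P3, (M n - p 0) :=
    sum_split (fun p => M n - p 0) hP2 hP3 P2_ne_P3
  have hbound : ∀ p ∈ ((Rs n).erase P2).erase P3, M n - p 0 ≤ dist p (g0 n p) := by
    intro p hp
    have hp3 : p ≠ P3 := (Finset.mem_erase.1 hp).1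
    have hp2 : p ≠ P2 := (Finset.mem_erase.1 (Finset.mem_erase.1 hp).2).1
    have hpR : p ∈ Rs n := Finset.mem_erase.1 (Finset.mem_erase.1 hp).2 |>.2
    rcases mem_Rs_iff.1 hpR with h | h | h | ⟨i, hi, h⟩
    · subst h; rw [g0_P1]
      have := dist_ge_x P1 (QQ n 0)
      rw [QQ0] at this; exact this
    · exact absurd h hp2
    · exact absurd h hp3
    · subst h; rw [g0_EE]
      have := dist_ge_x (EE i) (QQ n (i+1))
      rw [QQ0] at this; exact this
  have hsum : ∑ p ∈ ((Rs n).erase P2).erase P3, (M n - p 0)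
      ≤ ∑ p ∈ ((Rs n).erase P2).erase P3, dist p (g0 n p) :=
    Finset.sum_le_sum hbound
  have e1 : P2 0 = 0 := rfl
  have e2 : P3 0 = 0 := rfl
  have ed : dist P2 (g0 n P2) = 11/10 := by rw [g0_P2, dist_P2B2]
  have ed2 : dist P3 (g0 n P3) = 11/10 := by rw [g0_P3, dist_P3B3]
  have hS : Ssum n = ∑ p ∈ Rs n, (M n - p 0) := rfl
  rw [bmCost, hsplit, ed, ed2, hS, hsplit2, e1, e2]
  linarith

lemma f_upper (hn : 4 ≤ n) (f : Pt → Pt) (hbij : Set.BijOn f ↑(Rs n) ↑(Bs n))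
    {r2 r3 : Pt} (hr2 : r2 ∈ Rs n) (hr3 : r3 ∈ Rs n) (hfr2 : f r2 = B2) (hfr3 : f r3 = B3)
    (hne : r2 ≠ r3) :
    bmCost (Rs n) f ≤ Ssum n - 2*(M n)
      + (r2 0 + dist r2 B2) + (r3 0 + dist r3 B3) + 1/100 := by
  have hMn := Mn_ge hn
  have hn4 : (4:ℝ) ≤ (n:ℝ) := by exact_mod_cast hn
  have hsplit : ∑ p ∈ Rs n, dist p (f p)
      = dist r2 (f r2) + dist r3 (f r3)
        + ∑ p ∈ ((Rs n).erase r2).erase r3, dist p (f p) :=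
    sum_split (fun p => dist p (f p)) hr2 hr3 hne
  have hsplit2 : ∑ p ∈ Rs n, (M n - p 0)
      = (M n - r2 0) + (M n - r3 0) + ∑ p ∈ ((Rs n).erase r2).erase r3, (M n - p 0) :=
    sum_split (fun p => M n - p 0) hr2 hr3 hne
  have hbound : ∀ p ∈ ((Rs n).erase r2).erase r3,
      dist p (f p) ≤ (M n - p 0) + 4*(n:ℝ)^2/(M n) := by
    intro p hp
    have hp3 : p ≠ r3 := (Finset.mem_erase.1 hp).1
    have hp2 : p ≠ r2 := (Finset.mem_erase.1 (Finset.mem_erase.1 hp).2).1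
    have hpR : p ∈ Rs n := Finset.mem_erase.1 (Finset.mem_erase.1 hp).2 |>.2
    have hfp : f p ∈ Bs n := Finset.mem_coe.1 (hbij.1 (Finset.mem_coe.2 hpR))
    have hfp2 : f p ≠ B2 := by
      intro hh
      exact hp2 (hbij.2.1 (Finset.mem_coe.2 hpR) (Finset.mem_coe.2 hr2) (by rw [hh, hfr2]))
    have hfp3 : f p ≠ B3 := by
      intro hh
      exact hp3 (hbij.2.1 (Finset.mem_coe.2 hpR) (Finset.mem_coe.2 hr3) (by rw [hh, hfr3]))
    rcases mem_Bs_iff.1 hfp with h | h | ⟨j, hj, h⟩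
    · exact absurd h hfp2
    · exact absurd h hfp3
    rw [h]
    have hx : p 0 ≤ 1/2 := red_x_le p hpR
    have hy : (p 1)^2 ≤ 1 := red_y_abs p hpR
    have hlt : p 0 < QQ n j 0 := by rw [QQ0]; linarith
    have hd := dist_le_x p (QQ n j) hlt
    rw [QQ0, QQ1] at hd
    have hjn : (j:ℝ) ≤ (n:ℝ) := by exact_mod_cast Nat.le_of_lt (by omega)
    have hj0 : (0:ℝ) ≤ (j:ℝ) := Nat.cast_nonneg j
    have hy1 : p 1 ≤ 1 := by nlinarith
    have hy2 : -1 ≤ p 1 := by nlinarith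
    have ha1 : (j:ℝ) - p 1 ≤ (n:ℝ) + 1 := by linarith
    have ha2 : -((n:ℝ) + 1) ≤ (j:ℝ) - p 1 := by linarith
    have hnum : ((j:ℝ) - p 1)^2 ≤ 4*(n:ℝ)^2 := by
      nlinarith [mul_nonneg (by linarith : (0:ℝ) ≤ (n:ℝ) + 1 - ((j:ℝ) - p 1))
        (by linarith : (0:ℝ) ≤ (n:ℝ) + 1 + ((j:ℝ) - p 1))]
    have hden : M n ≤ 2*(M n - p 0) := by linarith
    have hfrac : ((j:ℝ) - p 1)^2/(2*(M n - p 0)) ≤ 4*(n:ℝ)^2/(M n) := by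
      apply div_le_div₀ (by positivity) hnum (by linarith) hden
    linarith
  have hsum : ∑ p ∈ ((Rs n).erase r2).erase r3, dist p (f p)
      ≤ ∑ p ∈ ((Rs n).erase r2).erase r3, ((M n - p 0) + 4*(n:ℝ)^2/(M n)) :=
    Finset.sum_le_sum hbound
  rw [Finset.sum_add_distrib, Finset.sum_const, nsmul_eq_mul] at hsum
  have hcard : (((Rs n).erase r2).erase r3).card = n - 2 := by
    rw [Finset.card_erase_of_mem (Finset.mem_erase.2 ⟨fun hh => hne hh.symm, hr3⟩),
      Finset.card_erase_of_mem hr2, card_Rs hn]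
    omega
  have hcard' : ((((Rs n).erase r2).erase r3).card : ℝ) ≤ (n:ℝ) := by
    rw [hcard]; exact_mod_cast Nat.sub_le n 2
  have herr : ((((Rs n).erase r2).erase r3).card : ℝ) * (4*(n:ℝ)^2/(M n)) ≤ 1/100 := by
    have hnpos : (0:ℝ) < (n:ℝ) := by linarith
    have h1 : ((((Rs n).erase r2).erase r3).card : ℝ) * (4*(n:ℝ)^2/(M n))
        ≤ (n:ℝ) * (4*(n:ℝ)^2/(M n)) := by
      apply mul_le_mul_of_nonneg_right hcard' (by positivity)
    have h2 : (n:ℝ) * (4*(n:ℝ)^2/(M n)) = 4/10^7 := by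
      rw [M]; field_simp
    linarith
  have hS : Ssum n = ∑ p ∈ Rs n, (M n - p 0) := rfl
  rw [bmCost, hsplit, hfr2, hfr3, hS, hsplit2]
  linarith

lemma forced (hn : 4 ≤ n) (f : Pt → Pt) (hf : IsMaxSumBichromatic (Rs n) (Bs n) f) :
    f P2 = B2 ∧ f P3 = B3 := by
  obtain ⟨hbij, hmax⟩ := hf
  obtain ⟨r2, hr2, hfr2⟩ := hbij.2.2 (Finset.mem_coe.2 (B2_mem (n := n)))
  obtain ⟨r3, hr3, hfr3⟩ := hbij.2.2 (Finset.mem_coe.2 (B3_mem (n := n)))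
  have hr2' : r2 ∈ Rs n := Finset.mem_coe.1 hr2
  have hr3' : r3 ∈ Rs n := Finset.mem_coe.1 hr3
  have hne : r2 ≠ r3 := by
    intro hh
    rw [hh, hfr3] at hfr2
    exact B2_ne_B3 hfr2.symm
  have hup := f_upper hn f hbij hr2' hr3' hfr2 hfr3 hne
  have hlo := g0_lower hn
  have hmax' := hmax (g0 n) (g0_bij hn)
  have hK : 219/100 ≤ (r2 0 + dist r2 B2) + (r3 0 + dist r3 B3) := by linarith
  have hKr2 : r2 0 + dist r2 B2 ≤ 11/10 := K2_le r2 hr2'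
  have hKr3 : r3 0 + dist r3 B3 ≤ 11/10 := K3_le r3 hr3'
  have h2 : r2 = P2 := by
    by_contra hc
    have := K2_lt r2 hr2' hc
    linarith
  have h3 : r3 = P3 := by
    by_contra hc
    have := K3_lt r3 hr3' hc
    linarith
  subst h2; subst h3
  exact ⟨hfr2, hfr3⟩

end S3

set_option maxHeartbeats 2000000 in
open S3 in
/-- For every n ≥ 4 there are disjoint n-point sets R and B such that for every max-sum
bichromatic matching, the n disks of the matching have empty intersection. -/
theorem stmt3 (n : ℕ) (hn : 4 ≤ n) :
    ∃ R B : Finset Pt, Disjoint R B ∧ R.card = n ∧ B.card = n ∧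
      ∀ f : Pt → Pt, IsMaxSumBichromatic R B f →
        (⋂ p ∈ (R : Set Pt), disk p (f p)) = ∅ := by
  refine ⟨Rs n, Bs n, disjoint_RsBs hn, card_Rs hn, card_Bs hn, ?_⟩
  intro f hf
  obtain ⟨hfP2, hfP3⟩ := forced hn f hf
  obtain ⟨hbij, -⟩ := hf
  have hP1B : f P1 ∈ Bs n := Finset.mem_coe.1 (hbij.1 (Finset.mem_coe.2 (P1_mem (n := n))))
  have hne2 : f P1 ≠ B2 := by
    intro hh
    exact P1_ne_P2 (hbij.2.1 (Finset.mem_coe.2 (P1_mem (n := n)))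
      (Finset.mem_coe.2 (P2_mem (n := n))) (by rw [hh, hfP2]))
  have hne3 : f P1 ≠ B3 := by
    intro hh
    exact P1_ne_P3 (hbij.2.1 (Finset.mem_coe.2 (P1_mem (n := n)))
      (Finset.mem_coe.2 (P3_mem (n := n))) (by rw [hh, hfP3]))
  obtain ⟨j, hj, hfP1⟩ : ∃ j < n - 2, f P1 = QQ n j := by
    rcases mem_Bs_iff.1 hP1B with h | h | h
    · exact absurd h hne2
    · exact absurd h hne3
    · exact h
  rw [Set.eq_empty_iff_forall_notMem]
  intro c hc
  have h2 := mem_disk_iff.1 (Set.mem_iInter₂.1 hc P2 (Finset.mem_coe.2 (P2_mem (n := n))))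
  have h3 := mem_disk_iff.1 (Set.mem_iInter₂.1 hc P3 (Finset.mem_coe.2 (P3_mem (n := n))))
  have h1 := mem_disk_iff.1 (Set.mem_iInter₂.1 hc P1 (Finset.mem_coe.2 (P1_mem (n := n))))
  rw [hfP2] at h2
  rw [hfP3] at h3
  rw [hfP1] at h1
  simp only [P1, P2, P3, B2, B3, QQ0, QQ1, pt0, pt1] at h1 h2 h3
  -- h2 : (c 0 - 0)*(c 0 - 0) + (c 1 - 1)*(c 1 - (-1/10)) ≤ 0
  -- h3 : (c 0 - 0)*(c 0 - 0) + (c 1 - (-1))*(c 1 - 1/10) ≤ 0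
  -- h1 : (c 0 - 1/2)*(c 0 - M n) + (c 1 - 0)*(c 1 - j) ≤ 0
  have hM := Mn_ge hn
  have hn4 : (4:ℝ) ≤ (n:ℝ) := by exact_mod_cast hn
  generalize hgen : M n = m at *
  have hMn2 : 10^7*(n:ℝ) ≤ M n := by
    have h0 : (0:ℝ) ≤ (n:ℝ)*((n:ℝ)-1)*((n:ℝ)+1) :=
      mul_nonneg (mul_nonneg (by linarith) (by linarith)) (by linarith)
    rw [M]; nlinarith [h0]
  have hj0 : (0:ℝ) ≤ (j:ℝ) := Nat.cast_nonneg j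
  have hjn : (j:ℝ) ≤ (n:ℝ) := by exact_mod_cast Nat.le_of_lt (by omega)
  have hsum : (c 0)^2 + (c 1)^2 ≤ 1/10 := by nlinarith [h2, h3]
  have hc0 : c 0 ≤ 3/8 := by nlinarith [hsum, sq_nonneg (c 1)]
  have hc1a : c 1 ≤ 2/5 := by nlinarith [hsum, sq_nonneg (c 0)]
  have hprod : (1/8)*(M n - 3/8) ≤ (c 0 - 1/2)*(c 0 - M n) := by
    have e : (c 0 - 1/2)*(c 0 - M n) = (1/2 - c 0)*(M n - c 0) := by ring
    rw [e]
    have h18 : (1:ℝ)/8 ≤ 1/2 - c 0 := by linarith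
    have hMc : M n - 3/8 ≤ M n - c 0 := by linarith
    exact mul_le_mul h18 hMc (by linarith) (by linarith)
  have hcj : c 1 * (j:ℝ) ≤ (2/5)*(n:ℝ) := by
    have := mul_le_mul_of_nonneg_right hc1a hj0
    nlinarith
  have hb : -((2:ℝ)/5)*(n:ℝ) ≤ c 1 * (c 1 - (j:ℝ)) := by nlinarith [sq_nonneg (c 1), hcj]
  nlinarith [h1, hprod, hb, hMn2, hn4]
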